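/- For every integer d ≥ 2 and every x ∈ D^{d-1}, the configuration c(x) = ((R_{d-1}(−x_1/2, …, −x_{d-1}/2, 1/4), 1/4), (R_{d-1}(x/2 + P_{1/4}), 1/4)), obtained from Ψ(x) = ((x/2 + P_{1/4}, 1/4), ((−x_1/2, …, −x_{d-1}/2, 1/4), 1/4)) by swapping the two balls and applying R_{d-1} to both centers, is a well-defined point of SC_d(2,0;o), and π_c(c(x)) = r_d(J⁺(x)), where J⁺(x) = x'/‖x'‖ with x' = (x_1, …, x_{d-1}, x_d/2). -/
import Mathlib


noncomputable section

/-- The last index of `Fin d` (corresponding to the last coordinate `x_d`). -/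
def lastIdx (d : ℕ) (hd : 2 ≤ d) : Fin d := ⟨d - 1, by omega⟩

/-- The point `P_{1/4} = (0, …, 0, 1/4)` of `ℝ^d`. -/
def Pquarter (d : ℕ) (hd : 2 ≤ d) : EuclideanSpace ℝ (Fin d) :=
  EuclideanSpace.single (lastIdx d hd) 4⁻¹

/-- The reflection `r_d` of `ℝ^d` negating the last coordinate. -/
def reflLast (d : ℕ) (hd : 2 ≤ d) :
    EuclideanSpace ℝ (Fin d) → EuclideanSpace ℝ (Fin d) :=
  fun x => x - EuclideanSpace.single (lastIdx d hd) (2 * x (lastIdx d hd))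

/-- The composite `R_{d-1}` of the reflections `r_1, …, r_{d-1}`, i.e. the map negating
the first `d − 1` coordinates and keeping the last one. -/
def bigR (d : ℕ) (hd : 2 ≤ d) :
    EuclideanSpace ℝ (Fin d) → EuclideanSpace ℝ (Fin d) :=
  fun x => -x + EuclideanSpace.single (lastIdx d hd) (2 * x (lastIdx d hd))

/-- The configuration space `SC_d(2,0;o)` of two nonoverlapping balls in the closed
upper unit semiball of `ℝ^d`. -/
def SC20o (d : ℕ) (hd : 2 ≤ d) :
    Set ((EuclideanSpace ℝ (Fin d) × ℝ) × (EuclideanSpace ℝ (Fin d) × ℝ)) :=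
  {c | 0 < c.1.2 ∧ 0 < c.2.2 ∧
       c.1.1 (lastIdx d hd) ≥ c.1.2 ∧ c.2.1 (lastIdx d hd) ≥ c.2.2 ∧
       ‖c.1.1‖ + c.1.2 ≤ 1 ∧ ‖c.2.1‖ + c.2.2 ≤ 1 ∧
       ‖c.1.1 - c.2.1‖ ≥ c.1.2 + c.2.2}

/-- The closed disc `D^{d-1} = {x ∈ S^{d-1} : x_d ≥ 0}`. -/
def upperHemi (d : ℕ) (hd : 2 ≤ d) : Set (EuclideanSpace ℝ (Fin d)) :=
  {z | ‖z‖ = 1 ∧ z (lastIdx d hd) ≥ 0}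

/-- The raw formula of the projection `π_c`, sending `((x,r),(y,s))` to `(x−y)/‖x−y‖`. -/
def rawPi (d : ℕ) :
    (EuclideanSpace ℝ (Fin d) × ℝ) × (EuclideanSpace ℝ (Fin d) × ℝ) →
      EuclideanSpace ℝ (Fin d) :=
  fun c => ‖c.1.1 - c.2.1‖⁻¹ • (c.1.1 - c.2.1)

/-- The first center of `Ψ(x)`, namely `x/2 + P_{1/4}`. -/
def firstCenter (d : ℕ) (hd : 2 ≤ d) :
    EuclideanSpace ℝ (Fin d) → EuclideanSpace ℝ (Fin d) :=
  fun x => (2 : ℝ)⁻¹ • x + Pquarter d hd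

/-- The second center of `Ψ(x)`, namely `(−x_1/2, …, −x_{d-1}/2, 1/4)`, i.e. `−x/2` with
its last coordinate replaced by `1/4`. -/
def secondCenter (d : ℕ) (hd : 2 ≤ d) :
    EuclideanSpace ℝ (Fin d) → EuclideanSpace ℝ (Fin d) :=
  fun x =>
    -((2 : ℝ)⁻¹ • x) + EuclideanSpace.single (lastIdx d hd) (x (lastIdx d hd) / 2 + 4⁻¹)

/-- The configuration `c(x)`, obtained from
`Ψ(x) = ((firstCenter x, 1/4), (secondCenter x, 1/4))` by swapping the two balls and
applying `R_{d-1}` to both centers. -/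
def swappedReflected (d : ℕ) (hd : 2 ≤ d) :
    EuclideanSpace ℝ (Fin d) →
      (EuclideanSpace ℝ (Fin d) × ℝ) × (EuclideanSpace ℝ (Fin d) × ℝ) :=
  fun x => ((bigR d hd (secondCenter d hd x), 4⁻¹), (bigR d hd (firstCenter d hd x), 4⁻¹))

/-- The vector `x' = (x_1, …, x_{d-1}, x_d/2)`. -/
def halveLast (d : ℕ) (hd : 2 ≤ d) :
    EuclideanSpace ℝ (Fin d) → EuclideanSpace ℝ (Fin d) :=
  fun x => x - EuclideanSpace.single (lastIdx d hd) (x (lastIdx d hd) / 2)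

/-- The raw formula of `J⁺`, `x ↦ x'/‖x'‖` with `x' = (x_1, …, x_{d-1}, x_d/2)`. -/
def Jplus (d : ℕ) (hd : 2 ≤ d) :
    EuclideanSpace ℝ (Fin d) → EuclideanSpace ℝ (Fin d) :=
  fun x => ‖halveLast d hd x‖⁻¹ • halveLast d hd x

open scoped RealInnerProductSpace in
lemma single_norm_sq_aux (d : ℕ) (i : Fin d) (x : EuclideanSpace ℝ (Fin d)) (s c : ℝ) :
    ‖s • x + EuclideanSpace.single i c‖ ^ 2
      = s ^ 2 * ‖x‖ ^ 2 + 2 * (s * (x i * c)) + c ^ 2 := by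
  rw [norm_add_sq_real, real_inner_smul_left, norm_smul, EuclideanSpace.norm_single]
  have h1 : ⟪x, EuclideanSpace.single i c⟫ = x i * c := by
    rw [EuclideanSpace.inner_single_right]; ring_nf; simp
  rw [h1]; simp [Real.norm_eq_abs, mul_pow, sq_abs]

lemma coord_abs_le_norm (d : ℕ) (i : Fin d) (x : EuclideanSpace ℝ (Fin d)) : |x i| ≤ ‖x‖ := by
  have := abs_real_inner_le_norm (EuclideanSpace.single i (1:ℝ)) x
  simpa [EuclideanSpace.inner_single_left] using this

lemma le_norm_of_sq_le {E : Type*} [NormedAddCommGroup E] (v : E) (a : ℝ) (ha : 0 ≤ a)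
    (h : a ^ 2 ≤ ‖v‖ ^ 2) : a ≤ ‖v‖ := by
  nlinarith [norm_nonneg v]

lemma norm_le_of_sq_le {E : Type*} [NormedAddCommGroup E] (v : E) (a : ℝ) (ha : 0 ≤ a)
    (h : ‖v‖ ^ 2 ≤ a ^ 2) : ‖v‖ ≤ a := by
  nlinarith [norm_nonneg v]

set_option maxHeartbeats 1000000 in
/-- For every integer `d ≥ 2` and every `x ∈ D^{d-1}`, the configuration
`c(x) = ((R_{d-1}(secondCenter x), 1/4), (R_{d-1}(firstCenter x), 1/4))`, obtained from
`Ψ(x)` by swapping the two balls and applying `R_{d-1}` to both centers, is a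
well-defined point of `SC_d(2,0;o)`, and `π_c(c(x)) = r_d(J⁺(x))`. -/
theorem swissCheese_swapped_reflected_projects_to_rd_Jplus (d : ℕ) (hd : 2 ≤ d) :
    ∀ x ∈ upperHemi d hd,
      swappedReflected d hd x ∈ SC20o d hd ∧
      rawPi d (swappedReflected d hd x) = reflLast d hd (Jplus d hd x) := by
  intro x hx
  obtain ⟨hx1, hx2⟩ := hx
  simp only [SC20o, swappedReflected, rawPi, Jplus, Set.mem_setOf_eq]
  set L := lastIdx d hd with hL
  have ht0 : 0 ≤ x L := hx2
  have ht1 : x L ≤ 1 := by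
    have := coord_abs_le_norm d L x
    rw [hx1] at this
    exact (abs_le.mp this).2
  set A := bigR d hd (secondCenter d hd x) with hAdef
  set B := bigR d hd (firstCenter d hd x) with hBdef
  set h := halveLast d hd x with hhdef
  -- vector identities
  have hA : A = (2:ℝ)⁻¹ • x + EuclideanSpace.single L (4⁻¹ - x L / 2) := by
    rw [hAdef]
    ext j
    simp only [bigR, secondCenter, ← hL, PiLp.add_apply, PiLp.neg_apply, PiLp.smul_apply,
      smul_eq_mul, EuclideanSpace.single_apply]
    by_cases hj : j = L <;> simp [hj] <;> ring
  have hB : B = (-(2:ℝ)⁻¹) • x + EuclideanSpace.single L (x L + 4⁻¹) := by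
    rw [hBdef]
    ext j
    simp only [bigR, firstCenter, Pquarter, ← hL, PiLp.add_apply, PiLp.neg_apply,
      PiLp.smul_apply, smul_eq_mul, EuclideanSpace.single_apply]
    by_cases hj : j = L <;> simp [hj] <;> ring
  have hh : h = (1:ℝ) • x + EuclideanSpace.single L (-(x L / 2)) := by
    rw [hhdef]
    ext j
    simp only [halveLast, ← hL, PiLp.add_apply, PiLp.sub_apply, PiLp.smul_apply,
      smul_eq_mul, EuclideanSpace.single_apply]
    by_cases hj : j = L <;> simp [hj] <;> ring
  have hAB : A - B = (1:ℝ) • x + EuclideanSpace.single L (-(3 / 2 * x L)) := by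
    rw [hA, hB]
    ext j
    simp only [PiLp.add_apply, PiLp.sub_apply, PiLp.smul_apply, smul_eq_mul,
      EuclideanSpace.single_apply]
    by_cases hj : j = L <;> simp [hj] <;> ring
  have hrh : reflLast d hd h = (1:ℝ) • x + EuclideanSpace.single L (-(3 / 2 * x L)) := by
    rw [hh]
    ext j
    simp only [reflLast, ← hL, PiLp.add_apply, PiLp.sub_apply, PiLp.smul_apply,
      smul_eq_mul, EuclideanSpace.single_apply]
    by_cases hj : j = L <;> simp [hj] <;> ring
  -- norm computations
  have hA2 : ‖A‖ ^ 2 = 5 / 16 - x L ^ 2 / 4 := by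
    rw [hA, single_norm_sq_aux, hx1]; ring
  have hB2 : ‖B‖ ^ 2 = 5 / 16 + x L / 4 := by
    rw [hB, single_norm_sq_aux, hx1]; ring
  have hAB2 : ‖A - B‖ ^ 2 = 1 - 3 / 4 * x L ^ 2 := by
    rw [hAB, single_norm_sq_aux, hx1]; ring
  have hh2 : ‖h‖ ^ 2 = 1 - 3 / 4 * x L ^ 2 := by
    rw [hh, single_norm_sq_aux, hx1]; ring
  -- coordinates
  have hAL : A L = 4⁻¹ := by
    rw [hA]
    simp only [PiLp.add_apply, PiLp.smul_apply, smul_eq_mul, EuclideanSpace.single_apply]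
    simp; ring
  have hBL : B L = x L / 2 + 4⁻¹ := by
    rw [hB]
    simp only [PiLp.add_apply, PiLp.smul_apply, smul_eq_mul, EuclideanSpace.single_apply]
    simp; ring
  clear hAdef hBdef hhdef
  clear_value A B h
  -- norm bounds
  have hAn : ‖A‖ ≤ 3 / 4 := by
    refine norm_le_of_sq_le A (3/4) (by norm_num) ?_
    rw [hA2]; nlinarith [sq_nonneg (x L)]
  have hBn : ‖B‖ ≤ 3 / 4 := by
    refine norm_le_of_sq_le B (3/4) (by norm_num) ?_
    rw [hB2]; nlinarith
  have hABn : (1:ℝ) / 2 ≤ ‖A - B‖ := by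
    refine le_norm_of_sq_le (A - B) (1/2) (by norm_num) ?_
    rw [hAB2]; nlinarith
  have hnorm_eq : ‖h‖ = ‖A - B‖ := by
    have h1 := congrArg Real.sqrt (hh2.trans hAB2.symm)
    rwa [Real.sqrt_sq (norm_nonneg _), Real.sqrt_sq (norm_nonneg _)] at h1
  refine ⟨⟨by norm_num, by norm_num, ?_, ?_, ?_, ?_, ?_⟩, ?_⟩
  · rw [hAL]
  · rw [hBL]; linarith
  · linarith
  · linarith
  · linarith
  · -- the projection formula
    have hcomm : reflLast d hd (‖h‖⁻¹ • h) = ‖h‖⁻¹ • reflLast d hd h := by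
      ext j
      simp only [reflLast, ← hL, PiLp.sub_apply, PiLp.smul_apply, smul_eq_mul,
        EuclideanSpace.single_apply]
      by_cases hj : j = L <;> simp [hj] <;> ring
    rw [hcomm, hrh, ← hAB, hnorm_eq]
  done
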